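/- For every normal form t ≠ e and every normal form u of the rewrite system R over {d, e, +, ·}, the normal form of t·u is either e or an application-term (i.e. of the form d·v); moreover, if nf(t·u) = e then u = e. -/

import Mathlib

/-- Ground terms over constants d, e with binary operations + (add) and · (app). -/
inductive Tm : Type
  | d : Tm
  | e : Tm
  | add : Tm → Tm → Tm
  | app : Tm → Tm → Tm
  deriving DecidableEq

open Tm

/-- Root rewrite steps: instances of the oriented rules. -/
inductive Root : Tm → Tm → Prop
  | addE (x) : Root (add x e) x
  | eAdd (x) : Root (add e x) x
  | assoc (x y z) : Root (add (add x y) z) (add x (add y z))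
  | appAdd (x y z) : Root (app (add x y) z) (app y (app x z))
  | appD (x y) : Root (app (app d x) y) (app x (add y x))
  | appE (x) : Root (app e x) x
  | dE : Root (app d e) e

/-- One rewrite step: a root step applied at some subterm position. -/
inductive Step : Tm → Tm → Prop
  | root {t u} : Root t u → Step t u
  | addL {t t' u} : Step t t' → Step (add t u) (add t' u)
  | addR {t u u'} : Step u u' → Step (add t u) (add t u')
  | appL {t t' u} : Step t t' → Step (app t u) (app t' u)
  | appR {t u u'} : Step u u' → Step (app t u) (app t u')

/-- Zero or more rewrite steps. -/
def Steps : Tm → Tm → Prop := Relation.ReflTransGen Step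

/-- A normal form is a term to which no rule applies. -/
def NormalForm (t : Tm) : Prop := ∀ u, ¬ Step t u

/-- Provable equality in the equational theory (reflexive symmetric transitive
congruence closure of the rule instances). -/
def TermEq : Tm → Tm → Prop := Relation.EqvGen Step

/-! Auxiliary development -/

/-- A termination measure for the rewrite system. -/
def mu : Tm → ℕ
  | Tm.d => 2
  | Tm.e => 2
  | Tm.add x y => 2 * mu x + mu y
  | Tm.app x y => mu y * 3 ^ mu x

lemma mu_pos : ∀ t, 2 ≤ mu t := by
  intro t
  induction t with
  | d => simp [mu]
  | e => simp [mu]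
  | add x y hx hy => simp only [mu]; omega
  | app x y hx hy =>
      simp only [mu]
      calc 2 ≤ mu y := hy
        _ ≤ mu y * 3 ^ mu x := Nat.le_mul_of_pos_right _ (by positivity)

lemma add_two_le_pow : ∀ n, 2 ≤ n → n + 2 ≤ 3 ^ n := by
  intro n
  induction n with
  | zero => omega
  | succ m ih =>
    intro h
    rcases Nat.lt_or_ge m 2 with h2 | h2
    · interval_cases m <;> norm_num
    · have h3 := ih h2
      have h4 : 3 ^ (m + 1) = 3 ^ m * 3 := pow_succ 3 m
      nlinarith

lemma root_mu {a b : Tm} (h : Root a b) : mu b < mu a := by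
  cases h with
  | addE => have := mu_pos b; simp only [mu]; omega
  | eAdd => simp only [mu]; omega
  | assoc x y z => have := mu_pos x; simp only [mu]; omega
  | appAdd x y z =>
      have hx := mu_pos x
      have hz := mu_pos z
      simp only [mu, mul_assoc, ← pow_add]
      exact mul_lt_mul_of_pos_left
        (Nat.pow_lt_pow_right (by norm_num) (by omega)) (by omega)
  | appD x y =>
      have hx := mu_pos x
      have hy := mu_pos y
      simp only [mu]
      have h1 : mu x + 2 ≤ 3 ^ mu x := add_two_le_pow _ hx
      have h2 : 2 * mu y + mu x ≤ mu y * 3 ^ mu x := by nlinarith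
      calc (2 * mu y + mu x) * 3 ^ mu x
          ≤ mu y * 3 ^ mu x * 3 ^ mu x := Nat.mul_le_mul_right _ h2
        _ = mu y * 3 ^ (mu x + mu x) := by rw [pow_add, mul_assoc]
        _ < mu y * 3 ^ (mu x * 3 ^ 2) :=
            mul_lt_mul_of_pos_left
              (Nat.pow_lt_pow_right (by norm_num) (by nlinarith)) (by omega)
  | appE => have := mu_pos b; simp only [mu]; nlinarith
  | dE => simp [mu]

lemma step_mu {a b : Tm} (h : Step a b) : mu b < mu a := by
  induction h with
  | root h => exact root_mu h
  | addL h ih => simp only [mu]; omega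
  | addR h ih => simp only [mu]; omega
  | appL h ih =>
      simp only [mu]
      exact mul_lt_mul_of_pos_left
        (Nat.pow_lt_pow_right (by norm_num) ih) (lt_of_lt_of_le (by norm_num) (mu_pos _))
  | appR h ih =>
      simp only [mu]
      exact mul_lt_mul_of_pos_right ih (by positivity)

lemma nf_e : NormalForm Tm.e := by
  intro u h
  cases h with
  | root hr => cases hr

lemma nf_addL {a b : Tm} (h : NormalForm (Tm.add a b)) : NormalForm a :=
  fun u hu => h _ (Step.addL hu)

lemma nf_addR {a b : Tm} (h : NormalForm (Tm.add a b)) : NormalForm b :=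
  fun u hu => h _ (Step.addR hu)

lemma nf_appL {a b : Tm} (h : NormalForm (Tm.app a b)) : NormalForm a :=
  fun u hu => h _ (Step.appL hu)

lemma nf_appR {a b : Tm} (h : NormalForm (Tm.app a b)) : NormalForm b :=
  fun u hu => h _ (Step.appR hu)

lemma steps_of_nf {t n : Tm} (h : NormalForm t) (hs : Steps t n) : n = t := by
  rcases Relation.ReflTransGen.cases_head hs with h' | ⟨c, hc, _⟩
  · exact h'.symm
  · exact absurd hc (h c)

lemma nf_app_head : ∀ a b : Tm, NormalForm (Tm.app a b) → a = Tm.d := by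
  intro a
  induction a with
  | d => intro b _; rfl
  | e => intro b h; exact absurd (Step.root (Root.appE b)) (h b)
  | add x y _ _ => intro b h; exact absurd (Step.root (Root.appAdd x y b)) (h _)
  | app c f ihc _ =>
      intro b h
      have hcf : NormalForm (Tm.app c f) := nf_appL h
      have hc : c = Tm.d := ihc f hcf
      subst hc
      exact absurd (Step.root (Root.appD f b)) (h _)

lemma steps_addL {a a' b : Tm} (h : Steps a a') :
    Steps (Tm.add a b) (Tm.add a' b) :=
  Relation.ReflTransGen.lift (fun x => Tm.add x b) (fun _ _ h => Step.addL h) _ _ h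

lemma add_steps_e : ∀ N, ∀ a b : Tm, mu (Tm.add a b) < N →
    Steps (Tm.add a b) Tm.e → Steps a Tm.e ∧ Steps b Tm.e := by
  intro N
  induction N with
  | zero => intro a b h _; omega
  | succ N ih =>
    intro a b hlt hs
    rcases Relation.ReflTransGen.cases_head hs with heq | ⟨c, hc, hrest⟩
    · exact Tm.noConfusion heq
    · have hcmu : mu c < mu (Tm.add a b) := step_mu hc
      cases hc with
      | root hr =>
        cases hr with
        | addE => exact ⟨hrest, Relation.ReflTransGen.refl⟩
        | eAdd => exact ⟨Relation.ReflTransGen.refl, hrest⟩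
        | assoc x y =>
            have hxp := mu_pos x
            have hb1 : mu (Tm.add x (Tm.add y b)) < N := by omega
            have h1 := ih x (Tm.add y b) hb1 hrest
            have hb2 : mu (Tm.add y b) < N := by
              simp only [mu] at hcmu hlt ⊢; omega
            have h2 := ih y b hb2 h1.2
            refine ⟨?_, h2.2⟩
            have hxy : Steps (Tm.add x y) (Tm.add Tm.e y) := steps_addL h1.1
            exact hxy.trans (Relation.ReflTransGen.head (Step.root (Root.eAdd y)) h2.1)
      | addL h =>
          have h1 := ih _ _ (by omega) hrest
          exact ⟨Relation.ReflTransGen.head h h1.1, h1.2⟩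
      | addR h =>
          have h1 := ih _ _ (by omega) hrest
          exact ⟨h1.1, Relation.ReflTransGen.head h h1.2⟩

lemma main_lemma : ∀ N, ∀ t u n : Tm, mu (Tm.app t u) < N →
    NormalForm t → t ≠ Tm.e → Steps (Tm.app t u) n → NormalForm n →
    (n = Tm.e ∨ ∃ v : Tm, n = Tm.app Tm.d v) ∧ (n = Tm.e → Steps u Tm.e) := by
  intro N
  induction N with
  | zero => intro t u n h; omega
  | succ N ih =>
    intro t u n hlt ht hte hs hn
    rcases Relation.ReflTransGen.cases_head hs with heq | ⟨c, hc, hrest⟩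
    · subst heq
      have hd : t = Tm.d := nf_app_head t u hn
      subst hd
      exact ⟨Or.inr ⟨u, rfl⟩, fun h => Tm.noConfusion h⟩
    · have hcmu : mu c < mu (Tm.app t u) := step_mu hc
      cases hc with
      | appL h => exact absurd h (ht _)
      | appR h =>
          have h1 := ih t _ n (by omega) ht hte hrest hn
          exact ⟨h1.1, fun he => Relation.ReflTransGen.head h (h1.2 he)⟩
      | root hr =>
        cases hr with
        | appAdd x y =>
            have hy : NormalForm y := nf_addR ht
            have hx : NormalForm x := nf_addL ht
            have hyne : y ≠ Tm.e := by rintro rfl; exact ht _ (Step.root (Root.addE x))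
            have hxne : x ≠ Tm.e := by rintro rfl; exact ht _ (Step.root (Root.eAdd y))
            have h1 := ih y (Tm.app x u) n (by omega) hy hyne hrest hn
            refine ⟨h1.1, fun he => ?_⟩
            have h2 : Steps (Tm.app x u) Tm.e := h1.2 he
            have hb : mu (Tm.app x u) < N := by
              have hxp := mu_pos x
              have hyp := mu_pos y
              have hzp := mu_pos u
              have hlt2 : mu (Tm.app x u) < mu (Tm.app (Tm.add x y) u) := by
                simp only [mu]
                exact mul_lt_mul_of_pos_left
                  (Nat.pow_lt_pow_right (by norm_num) (by omega)) (by omega)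
              omega
            have h3 := ih x u Tm.e hb hx hxne h2 nf_e
            exact h3.2 rfl
        | appD x =>
            have hx : NormalForm x := nf_appR ht
            have hxne : x ≠ Tm.e := by rintro rfl; exact ht _ (Step.root Root.dE)
            have h1 := ih x (Tm.add u x) n (by omega) hx hxne hrest hn
            refine ⟨h1.1, fun he => ?_⟩
            have h2 := (add_steps_e (mu (Tm.add u x) + 1) u x (Nat.lt_succ_self _) (h1.2 he)).2
            have h3 : Tm.e = x := steps_of_nf hx h2
            exact absurd h3.symm hxne
        | appE => exact absurd rfl hte
        | dE =>
            have hne : n = Tm.e := steps_of_nf nf_e hrest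
            subst hne
            exact ⟨Or.inl rfl, fun _ => Relation.ReflTransGen.refl⟩

/-- for normal forms t ≠ e and u, nf(t·u) is e or an application
term d·v; and if nf(t·u) = e then u = e. -/
theorem nf_app_shape :
    ∀ t u n : Tm, NormalForm t → t ≠ e → NormalForm u →
      Steps (app t u) n → NormalForm n →
      (n = e ∨ ∃ v : Tm, n = app d v) ∧ (n = e → u = e) := by
  intro t u n ht hte hu hs hn
  have h := main_lemma (mu (Tm.app t u) + 1) t u n (Nat.lt_succ_self _) ht hte hs hn
  exact ⟨h.1, fun he => (steps_of_nf hu (h.2 he)).symm⟩
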